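/- Let λ₁, λ₂ > 0 and let ξ : [t', t'+ε] → ℝ^d be a piecewise-C¹ path vanishing at both endpoints. Then ∫_{t'}^{t'+ε} (λ₁ |ξ'(τ)|² − λ₂ |ξ(τ)|²) dτ ≥ (λ₁/ε − ε λ₂) · sup_{τ∈[t',t'+ε]} |ξ(τ)|². In particular, if ε < √(λ₁/λ₂), this quantity is strictly positive whenever ξ is not identically zero. -/

import Mathlib

open MeasureTheory

/-- A piecewise-C¹ path on `[a,b]` together with its (piecewise) derivative `ξ'`. -/
def PiecewiseC1On {d : ℕ} (ξ ξ' : ℝ → EuclideanSpace ℝ (Fin d)) (a b : ℝ) : Prop :=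
  ContinuousOn ξ (Set.Icc a b) ∧
  ∃ S : Finset ℝ,
    (∀ τ ∈ Set.Icc a b \ S, HasDerivAt ξ (ξ' τ) τ) ∧
    ContinuousOn ξ' (Set.Icc a b \ S) ∧
    IntervalIntegrable ξ' volume a b ∧
    IntervalIntegrable (fun τ => ‖ξ' τ‖ ^ 2) volume a b



open intervalIntegral in
-- FTC with finite exceptional set
theorem ftc_finset {E : Type*} [NormedAddCommGroup E] [NormedSpace ℝ E] [CompleteSpace E]
    (S : Finset ℝ) : ∀ (f f' : ℝ → E) (a b : ℝ), a ≤ b →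
    ContinuousOn f (Set.Icc a b) →
    (∀ x ∈ Set.Ioo a b, x ∉ S → HasDerivAt f (f' x) x) →
    IntervalIntegrable f' volume a b →
    ∫ y in a..b, f' y = f b - f a := by
  induction S using Finset.induction_on with
  | empty =>
    intro f f' a b hab hcont hderiv hint
    exact integral_eq_sub_of_hasDeriv_right_of_le hab hcont
      (fun x hx => (hderiv x hx (Finset.notMem_empty x)).hasDerivWithinAt) hint
  | @insert c S hc IH =>
    intro f f' a b hab hcont hderiv hint
    by_cases hcab : c ∈ Set.Ioo a b
    · have hsub1 : Set.uIcc a c ⊆ Set.uIcc a b := by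
        rw [Set.uIcc_of_le hcab.1.le, Set.uIcc_of_le hab]
        exact Set.Icc_subset_Icc le_rfl hcab.2.le
      have hsub2 : Set.uIcc c b ⊆ Set.uIcc a b := by
        rw [Set.uIcc_of_le hcab.2.le, Set.uIcc_of_le hab]
        exact Set.Icc_subset_Icc hcab.1.le le_rfl
      have h1 : ∫ y in a..c, f' y = f c - f a := by
        refine IH f f' a c hcab.1.le (hcont.mono (Set.Icc_subset_Icc le_rfl hcab.2.le)) ?_
          (hint.mono_set hsub1)
        intro x hx hxS
        exact hderiv x ⟨hx.1, hx.2.trans hcab.2⟩ (by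
          simp only [Finset.mem_insert, not_or]
          exact ⟨ne_of_lt hx.2, hxS⟩)
      have h2 : ∫ y in c..b, f' y = f b - f c := by
        refine IH f f' c b hcab.2.le (hcont.mono (Set.Icc_subset_Icc hcab.1.le le_rfl)) ?_
          (hint.mono_set hsub2)
        intro x hx hxS
        exact hderiv x ⟨hcab.1.trans hx.1, hx.2⟩ (by
          simp only [Finset.mem_insert, not_or]
          exact ⟨(ne_of_lt hx.1).symm, hxS⟩)
      rw [← integral_add_adjacent_intervals (hint.mono_set hsub1) (hint.mono_set hsub2), h1, h2]
      abel
    · refine IH f f' a b hab hcont ?_ hint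
      intro x hx hxS
      refine hderiv x hx (by
        simp only [Finset.mem_insert, not_or]
        exact ⟨fun h => hcab (h ▸ hx), hxS⟩)

-- Cauchy–Schwarz (elementary)
theorem sq_integral_le_cs {α : Type*} [MeasurableSpace α] (μ : Measure α)
    (hμ : μ Set.univ ≠ ⊤) (f : α → ℝ) (hf : Integrable f μ)
    (hf2 : Integrable (fun x => f x ^ 2) μ) :
    (∫ x, f x ∂μ) ^ 2 ≤ (μ Set.univ).toReal * ∫ x, f x ^ 2 ∂μ := by
  set m := (μ Set.univ).toReal with hm
  have hm0 : 0 ≤ m := ENNReal.toReal_nonneg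
  rcases eq_or_lt_of_le hm0 with hm0' | hm0'
  · have : μ Set.univ = 0 := by
      have := ENNReal.toReal_eq_zero_iff (μ Set.univ)
      rw [← hm, ← hm0'] at this
      rcases this.mp rfl with h | h
      · exact h
      · exact absurd h hμ
    have hμ0 : μ = 0 := Measure.measure_univ_eq_zero.mp this
    simp [hμ0]
  · haveI : IsFiniteMeasure μ := ⟨lt_top_iff_ne_top.mpr hμ⟩
    set I := ∫ x, f x ∂μ with hI
    set J := ∫ x, f x ^ 2 ∂μ with hJ
    have key : 0 ≤ ∫ x, (m * f x - I) ^ 2 ∂μ := integral_nonneg fun x => sq_nonneg _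
    have expand : ∫ x, (m * f x - I) ^ 2 ∂μ = m ^ 2 * J - 2 * m * I * I + I ^ 2 * m := by
      have h1 : ∀ x, (m * f x - I) ^ 2 = m ^ 2 * f x ^ 2 - (2 * m * I) * f x + I ^ 2 := by
        intro x; ring
      simp_rw [h1]
      have ha : Integrable (fun x => m ^ 2 * f x ^ 2) μ := hf2.const_mul _
      have hb : Integrable (fun x => 2 * m * I * f x) μ := hf.const_mul _
      have hab : Integrable (fun x => m ^ 2 * f x ^ 2 - 2 * m * I * f x) μ := ha.sub hb
      rw [MeasureTheory.integral_add hab (integrable_const _),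
        MeasureTheory.integral_sub ha hb,
        integral_const_mul, integral_const_mul,
        MeasureTheory.integral_const]
      simp only [MeasureTheory.integral_const, smul_eq_mul, measureReal_def, ← hI, ← hJ, ← hm]
      ring
    rw [expand] at key
    nlinarith [key, hm0']


/-- for a piecewise-C¹ based loop,
`∫ (λ₁|ξ'|² − λ₂|ξ|²) ≥ (λ₁/ε − ελ₂) sup|ξ|²`; strict positivity for small `ε`. -/
theorem stmt_7 {d : ℕ} (t' ε lam₁ lam₂ : ℝ) (hε : 0 < ε)
    (hlam₁ : 0 < lam₁) (hlam₂ : 0 < lam₂)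
    (ξ ξ' : ℝ → EuclideanSpace ℝ (Fin d))
    (hpc : PiecewiseC1On ξ ξ' t' (t' + ε))
    (h0 : ξ t' = 0) (h1 : ξ (t' + ε) = 0) :
    (lam₁ / ε - ε * lam₂) * (sSup ((fun τ => ‖ξ τ‖) '' Set.Icc t' (t' + ε))) ^ 2 ≤
      (∫ τ in t'..t' + ε, (lam₁ * ‖ξ' τ‖ ^ 2 - lam₂ * ‖ξ τ‖ ^ 2)) ∧
    (ε < Real.sqrt (lam₁ / lam₂) → (∃ τ ∈ Set.Icc t' (t' + ε), ξ τ ≠ 0) →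
      0 < ∫ τ in t'..t' + ε, (lam₁ * ‖ξ' τ‖ ^ 2 - lam₂ * ‖ξ τ‖ ^ 2)) := by
  obtain ⟨hcont, S, hderiv, _hcont', hint', hint2⟩ := hpc
  have hab : t' ≤ t' + ε := by linarith
  set M := sSup ((fun τ => ‖ξ τ‖) '' Set.Icc t' (t' + ε)) with hM
  have hgc : ContinuousOn (fun τ => ‖ξ τ‖) (Set.Icc t' (t' + ε)) := hcont.norm
  have hcompact : IsCompact ((fun τ => ‖ξ τ‖) '' Set.Icc t' (t' + ε)) :=
    isCompact_Icc.image_of_continuousOn hgc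
  have hne : ((fun τ => ‖ξ τ‖) '' Set.Icc t' (t' + ε)).Nonempty :=
    ⟨_, Set.mem_image_of_mem _ (Set.left_mem_Icc.mpr hab)⟩
  obtain ⟨τ₀, hτ₀, hMτ₀⟩ := hcompact.sSup_mem hne
  have hMτ₀' : ‖ξ τ₀‖ = M := hMτ₀
  have hMle : ∀ τ ∈ Set.Icc t' (t' + ε), ‖ξ τ‖ ≤ M := fun τ hτ =>
    le_csSup hcompact.bddAbove (Set.mem_image_of_mem _ hτ)
  have hM0 : 0 ≤ M := hMτ₀' ▸ norm_nonneg _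
  set K := ∫ τ in t'..t' + ε, ‖ξ' τ‖ ^ 2 with hK
  set L := ∫ τ in t'..t' + ε, ‖ξ τ‖ ^ 2 with hL
  -- FTC
  have hftc : ∀ τ ∈ Set.Icc t' (t' + ε), ξ τ = ∫ u in t'..τ, ξ' u := by
    intro τ hτ
    have hsub : Set.uIcc t' τ ⊆ Set.uIcc t' (t' + ε) := by
      rw [Set.uIcc_of_le hτ.1, Set.uIcc_of_le hab]
      exact Set.Icc_subset_Icc le_rfl hτ.2
    have := ftc_finset S ξ ξ' t' τ hτ.1 (hcont.mono (Set.Icc_subset_Icc le_rfl hτ.2))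
      (fun x hx hxS => hderiv x ⟨⟨hx.1.le, hx.2.le.trans hτ.2⟩, by simpa using hxS⟩)
      (hint'.mono_set hsub)
    rw [this, h0, sub_zero]
  -- pointwise bound giving M^2 ≤ ε * K
  have hptw : ∀ τ ∈ Set.Icc t' (t' + ε), ‖ξ τ‖ ^ 2 ≤ ε * K := by
    intro τ hτ
    obtain ⟨hτ1, hτ2⟩ := hτ
    have hsub : Set.uIcc t' τ ⊆ Set.uIcc t' (t' + ε) := by
      rw [Set.uIcc_of_le hτ1, Set.uIcc_of_le hab]
      exact Set.Icc_subset_Icc le_rfl hτ2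
    have h1 : ‖ξ τ‖ ≤ ∫ u in t'..τ, ‖ξ' u‖ := by
      rw [hftc τ ⟨hτ1, hτ2⟩]
      exact intervalIntegral.norm_integral_le_integral_norm hτ1
    set μ := volume.restrict (Set.Ioc t' τ) with hμdef
    have hμuniv : μ Set.univ = ENNReal.ofReal (τ - t') := by
      rw [hμdef, Measure.restrict_apply_univ, Real.volume_Ioc]
    have hμtop : μ Set.univ ≠ ⊤ := by rw [hμuniv]; exact ENNReal.ofReal_ne_top
    have hμtoReal : (μ Set.univ).toReal = τ - t' := by
      rw [hμuniv, ENNReal.toReal_ofReal (by linarith)]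
    have hf : Integrable (fun u => ‖ξ' u‖) μ :=
      (intervalIntegrable_iff_integrableOn_Ioc_of_le hτ1).mp ((hint'.mono_set hsub).norm)
    have hf2 : Integrable (fun u => ‖ξ' u‖ ^ 2) μ :=
      (intervalIntegrable_iff_integrableOn_Ioc_of_le hτ1).mp (hint2.mono_set hsub)
    have hcs := sq_integral_le_cs μ hμtop (fun u => ‖ξ' u‖) hf hf2
    rw [hμtoReal] at hcs
    have h2 : (∫ u in t'..τ, ‖ξ' u‖) ^ 2 ≤ (τ - t') * ∫ u in t'..τ, ‖ξ' u‖ ^ 2 := by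
      rw [intervalIntegral.integral_of_le hτ1, intervalIntegral.integral_of_le hτ1]
      exact hcs
    have h3 : (∫ u in t'..τ, ‖ξ' u‖ ^ 2) ≤ K := by
      rw [hK]
      exact intervalIntegral.integral_mono_interval le_rfl hτ1 hτ2
        (Filter.Eventually.of_forall fun x => sq_nonneg _) hint2
    have h4 : 0 ≤ ∫ u in t'..τ, ‖ξ' u‖ ^ 2 :=
      intervalIntegral.integral_nonneg hτ1 fun x _ => sq_nonneg _
    have h5 : τ - t' ≤ ε := by linarith
    have h6 : 0 ≤ τ - t' := by linarith
    nlinarith [pow_le_pow_left₀ (norm_nonneg (ξ τ)) h1 2]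
  have hMK : M ^ 2 ≤ ε * K := by rw [← hMτ₀']; exact hptw τ₀ hτ₀
  have hK0 : 0 ≤ K := intervalIntegral.integral_nonneg hab fun x _ => sq_nonneg _
  -- L ≤ ε * M^2
  have hint_ξsq : IntervalIntegrable (fun τ => ‖ξ τ‖ ^ 2) volume t' (t' + ε) :=
    ContinuousOn.intervalIntegrable (by rw [Set.uIcc_of_le hab]; exact hgc.pow 2)
  have hLle : L ≤ ε * M ^ 2 := by
    have := intervalIntegral.integral_mono_on hab hint_ξsq intervalIntegrable_const
      (fun x hx => pow_le_pow_left₀ (norm_nonneg _) (hMle x hx) 2)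
    rw [intervalIntegral.integral_const] at this
    simpa [add_sub_cancel_left, smul_eq_mul] using this
  -- rewrite the target integral
  have hid : (∫ τ in t'..t' + ε, (lam₁ * ‖ξ' τ‖ ^ 2 - lam₂ * ‖ξ τ‖ ^ 2))
      = lam₁ * K - lam₂ * L := by
    rw [hK, hL, intervalIntegral.integral_sub (hint2.const_mul lam₁) (hint_ξsq.const_mul lam₂),
      intervalIntegral.integral_const_mul, intervalIntegral.integral_const_mul]
  have main : (lam₁ / ε - ε * lam₂) * M ^ 2 ≤ lam₁ * K - lam₂ * L := by
    have f1 : lam₁ / ε * M ^ 2 ≤ lam₁ * K := by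
      have h := mul_le_mul_of_nonneg_left hMK (div_pos hlam₁ hε).le
      calc lam₁ / ε * M ^ 2 ≤ lam₁ / ε * (ε * K) := h
        _ = lam₁ * K := by field_simp
    have f2 : lam₂ * L ≤ lam₂ * (ε * M ^ 2) := mul_le_mul_of_nonneg_left hLle hlam₂.le
    nlinarith [f1, f2]
  constructor
  · rw [hid]; exact main
  · rintro hsmall ⟨τ₁, hτ₁, hξτ₁⟩
    have hM1 : 0 < M := lt_of_lt_of_le (norm_pos_iff.mpr hξτ₁) (hMle τ₁ hτ₁)
    have hsq : ε ^ 2 < lam₁ / lam₂ := (Real.lt_sqrt hε.le).mp hsmall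
    have hcoef : 0 < lam₁ / ε - ε * lam₂ := by
      have h' : ε ^ 2 * lam₂ < lam₁ := (lt_div_iff₀ hlam₂).mp hsq
      have hpos : 0 < (lam₁ - ε ^ 2 * lam₂) / ε := div_pos (by linarith) hε
      calc (0:ℝ) < (lam₁ - ε ^ 2 * lam₂) / ε := hpos
        _ = lam₁ / ε - ε * lam₂ := by field_simp
    rw [hid]
    exact lt_of_lt_of_le (mul_pos hcoef (pow_pos hM1 2)) main
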